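/- (Main theorem) Fix n ≥ 1 and let 𝔈_1^A, …, 𝔈_n^A : L(H_A) → L(H_A) and 𝔈_1^B, …, 𝔈_n^B : L(H_B) → L(H_B) be maps that are either all complex-linear or all conjugate-linear, and suppose that for some ε^A, ε^B ≥ 0: Σ_{k=1}^{n} ‖𝔈_k^A(σ_k^A)‖_HS² ≤ n ε^A for all density operators σ_1^A, …, σ_n^A on H_A, and Σ_{k=1}^{n} ‖𝔈_k^B(σ_k^B)‖_HS² ≤ n ε^B for all density operators σ_1^B, …, σ_n^B on H_B. Define, for a state ρ on H_A ⊗ H_B with marginals ρ_A = tr_B(ρ), ρ_B = tr_A(ρ), the transformed operator 𝔈(ρ) := n⁻¹ (Σ_{k=1}^{n} 𝔈_k^A ⊗ 𝔈_k^B)(ρ) + n⁻¹ (Σ_{k ≠ l} 𝔈_k^A ⊗ 𝔈_l^B)(ρ_A ⊗ ρ_B). Then for every separable state ρ: ‖𝔈(ρ)‖_CCN ≤ √[ (ε^A + (1/n) Σ_{k<l} (⟨𝔈_k^A(ρ_A), 𝔈_l^A(ρ_A)⟩_HS + conj.)) · (ε^B + (1/n) Σ_{k<l} (⟨𝔈_k^B(ρ_B),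 𝔈_l^B(ρ_B)⟩_HS + conj.)) ]. -/

import Mathlib

open scoped Kronecker ComplexOrder
open Matrix Finset

set_option linter.unusedSectionVars false
set_option maxHeartbeats 1000000

/-- Hilbert-Schmidt inner product on matrices. -/
noncomputable def hsInner {n : Type*} [Fintype n] (A B : Matrix n n ℂ) : ℂ :=
  (Aᴴ * B).trace

/-- Hilbert-Schmidt norm. -/
noncomputable def hsNorm {n : Type*} [Fintype n] (A : Matrix n n ℂ) : ℝ :=
  Real.sqrt (hsInner A A).re

/-- A density operator: positive semidefinite with unit trace. -/
def IsDensity {n : Type*} [Fintype n] (ρ : Matrix n n ℂ) : Prop :=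
  ρ.PosSemidef ∧ ρ.trace = 1

/-- A separable bipartite state: a convex combination of product density operators. -/
def IsSeparableState {NA NB : ℕ} (ρ : Matrix (Fin NA × Fin NB) (Fin NA × Fin NB) ℂ) : Prop :=
  ∃ (m : ℕ) (p : Fin m → ℝ)
    (ρA : Fin m → Matrix (Fin NA) (Fin NA) ℂ) (ρB : Fin m → Matrix (Fin NB) (Fin NB) ℂ),
    (∀ i, 0 < p i) ∧ (∑ i, p i = 1) ∧ (∀ i, IsDensity (ρA i)) ∧ (∀ i, IsDensity (ρB i)) ∧
    ρ = ∑ i, (p i : ℂ) • (ρA i ⊗ₖ ρB i)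

/-- The computable cross norm (CCN) on bipartite operators. -/
noncomputable def ccn {NA NB : ℕ} (C : Matrix (Fin NA × Fin NB) (Fin NA × Fin NB) ℂ) : ℝ :=
  sInf { r : ℝ | ∃ (n : ℕ) (A : Fin n → Matrix (Fin NA) (Fin NA) ℂ)
    (B : Fin n → Matrix (Fin NB) (Fin NB) ℂ),
    C = ∑ k, A k ⊗ₖ B k ∧ r = ∑ k, hsNorm (A k) * hsNorm (B k) }

/-- The action of the tensor product `F ⊗ G` of two (jointly linear or conjugate-linear)
superoperators on a bipartite operator, written in terms of matrix blocks. -/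
noncomputable def tensorApply {NA NB : ℕ} {σ : ℂ →+* ℂ}
    (F : Matrix (Fin NA) (Fin NA) ℂ →ₛₗ[σ] Matrix (Fin NA) (Fin NA) ℂ)
    (G : Matrix (Fin NB) (Fin NB) ℂ →ₛₗ[σ] Matrix (Fin NB) (Fin NB) ℂ)
    (M : Matrix (Fin NA × Fin NB) (Fin NA × Fin NB) ℂ) :
    Matrix (Fin NA × Fin NB) (Fin NA × Fin NB) ℂ :=
  ∑ b : Fin NB, ∑ b' : Fin NB,
    (F (Matrix.of fun i i' => M (i, b) (i', b'))) ⊗ₖ (G (Matrix.single b b' 1))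

/-- The marginal (reduced density operator) of a bipartite operator on the A-side. -/
noncomputable def margA {NA NB : ℕ} (ρ : Matrix (Fin NA × Fin NB) (Fin NA × Fin NB) ℂ) :
    Matrix (Fin NA) (Fin NA) ℂ :=
  Matrix.of fun i i' => ∑ b : Fin NB, ρ (i, b) (i', b)

/-- The marginal (reduced density operator) of a bipartite operator on the B-side. -/
noncomputable def margB {NA NB : ℕ} (ρ : Matrix (Fin NA × Fin NB) (Fin NA × Fin NB) ℂ) :
    Matrix (Fin NB) (Fin NB) ℂ :=
  Matrix.of fun b b' => ∑ i : Fin NA, ρ (i, b) (i, b')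

/-! ### Auxiliary lemmas: Hilbert-Schmidt inner product and norm -/

section base
variable {d : Type*} [Fintype d]

lemma hsInner_self_re (A : Matrix d d ℂ) :
    (hsInner A A).re = ∑ i, ∑ j, Complex.normSq (A j i) := by
  simp [hsInner, Matrix.trace, Matrix.mul_apply, Matrix.diag, Matrix.conjTranspose_apply,
    Complex.normSq_apply]

lemma hsInner_self_re_nonneg (A : Matrix d d ℂ) : 0 ≤ (hsInner A A).re := by
  rw [hsInner_self_re]
  exact Finset.sum_nonneg fun i _ => Finset.sum_nonneg fun j _ => Complex.normSq_nonneg _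

lemma hsNorm_nonneg (A : Matrix d d ℂ) : 0 ≤ hsNorm A := Real.sqrt_nonneg _

lemma hsNorm_sq (A : Matrix d d ℂ) : hsNorm A ^ 2 = (hsInner A A).re :=
  Real.sq_sqrt (hsInner_self_re_nonneg A)

lemma hsInner_add_left (A B C : Matrix d d ℂ) :
    hsInner (A + B) C = hsInner A C + hsInner B C := by
  simp [hsInner, Matrix.conjTranspose_add, Matrix.add_mul]

lemma hsInner_add_right (A B C : Matrix d d ℂ) :
    hsInner A (B + C) = hsInner A B + hsInner A C := by
  simp [hsInner, Matrix.mul_add]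

lemma hsInner_sub_left (A B C : Matrix d d ℂ) :
    hsInner (A - B) C = hsInner A C - hsInner B C := by
  simp [hsInner, Matrix.conjTranspose_sub, Matrix.sub_mul]

lemma hsInner_sub_right (A B C : Matrix d d ℂ) :
    hsInner A (B - C) = hsInner A B - hsInner A C := by
  simp [hsInner, Matrix.mul_sub]

lemma hsInner_smul_left (c : ℂ) (A B : Matrix d d ℂ) :
    hsInner (c • A) B = (starRingEnd ℂ) c * hsInner A B := by
  simp [hsInner, Matrix.conjTranspose_smul, Matrix.smul_mul, Matrix.trace_smul]

lemma hsInner_smul_right (c : ℂ) (A B : Matrix d d ℂ) :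
    hsInner A (c • B) = c * hsInner A B := by
  simp [hsInner, Matrix.mul_smul, Matrix.trace_smul]

lemma hsInner_conj (A B : Matrix d d ℂ) :
    hsInner B A = (starRingEnd ℂ) (hsInner A B) := by
  have h : Bᴴ * A = (Aᴴ * B)ᴴ := by simp [Matrix.conjTranspose_mul]
  rw [hsInner, h, Matrix.trace_conjTranspose, hsInner]
  rfl

lemma hsInner_re_comm (A B : Matrix d d ℂ) :
    (hsInner B A).re = (hsInner A B).re := by
  rw [hsInner_conj]; exact Complex.conj_re _

lemma hsInner_sum_left {ι : Type*} (s : Finset ι) (f : ι → Matrix d d ℂ) (B : Matrix d d ℂ) :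
    hsInner (∑ i ∈ s, f i) B = ∑ i ∈ s, hsInner (f i) B := by
  classical
  induction s using Finset.induction with
  | empty => simp [hsInner]
  | insert _ _ h ih => simp [Finset.sum_insert h, hsInner_add_left, ih]

lemma hsInner_sum_right {ι : Type*} (s : Finset ι) (A : Matrix d d ℂ) (f : ι → Matrix d d ℂ) :
    hsInner A (∑ i ∈ s, f i) = ∑ i ∈ s, hsInner A (f i) := by
  classical
  induction s using Finset.induction with
  | empty => simp [hsInner]
  | insert _ _ h ih => simp [Finset.sum_insert h, hsInner_add_right, ih]

lemma hsNorm_smul (c : ℂ) (A : Matrix d d ℂ) : hsNorm (c • A) = ‖c‖ * hsNorm A := by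
  rw [hsNorm, hsNorm, hsInner_smul_left, hsInner_smul_right, ← mul_assoc,
    ← Complex.normSq_eq_conj_mul_self, Complex.re_ofReal_mul,
    Real.sqrt_mul (Complex.normSq_nonneg c)]
  rw [show Real.sqrt (Complex.normSq c) = ‖c‖ from (Complex.norm_def c).symm]

lemma hsNorm_ofReal_smul (c : ℝ) (hc : 0 ≤ c) (A : Matrix d d ℂ) :
    hsNorm ((c : ℂ) • A) = c * hsNorm A := by
  rw [hsNorm_smul]
  simp [Complex.norm_real, abs_of_nonneg hc]

end base

/-! ### Auxiliary lemmas: Kronecker products -/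

section kron
variable {la lb : Type*} [Fintype la] [Fintype lb]

lemma smul_kronecker' (c : ℂ) (A : Matrix la la ℂ) (B : Matrix lb lb ℂ) :
    (c • A) ⊗ₖ B = c • (A ⊗ₖ B) := by
  ext ⟨i, j⟩ ⟨i', j'⟩
  simp [Matrix.kroneckerMap_apply, mul_assoc]

lemma kronecker_smul' (c : ℂ) (A : Matrix la la ℂ) (B : Matrix lb lb ℂ) :
    A ⊗ₖ (c • B) = c • (A ⊗ₖ B) := by
  ext ⟨i, j⟩ ⟨i', j'⟩
  simp [Matrix.kroneckerMap_apply]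
  ring

lemma sum_kronecker'' {ι : Type*} (s : Finset ι) (A : ι → Matrix la la ℂ) (B : Matrix lb lb ℂ) :
    (∑ i ∈ s, A i) ⊗ₖ B = ∑ i ∈ s, (A i ⊗ₖ B) := by
  ext ⟨i, j⟩ ⟨i', j'⟩
  simp [Matrix.kroneckerMap_apply, Matrix.sum_apply, Finset.sum_mul]

lemma kronecker_sum' {ι : Type*} (s : Finset ι) (A : Matrix la la ℂ) (B : ι → Matrix lb lb ℂ) :
    A ⊗ₖ (∑ i ∈ s, B i) = ∑ i ∈ s, (A ⊗ₖ B i) := by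
  ext ⟨i, j⟩ ⟨i', j'⟩
  simp [Matrix.kroneckerMap_apply, Matrix.sum_apply, Finset.mul_sum]

lemma sub_kronecker' (A A' : Matrix la la ℂ) (B : Matrix lb lb ℂ) :
    (A - A') ⊗ₖ B = A ⊗ₖ B - A' ⊗ₖ B := by
  ext ⟨i, j⟩ ⟨i', j'⟩
  simp [Matrix.kroneckerMap_apply, sub_mul]

lemma kronecker_sub' (A : Matrix la la ℂ) (B B' : Matrix lb lb ℂ) :
    A ⊗ₖ (B - B') = A ⊗ₖ B - A ⊗ₖ B' := by
  ext ⟨i, j⟩ ⟨i', j'⟩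
  simp [Matrix.kroneckerMap_apply, mul_sub]

end kron

/-! ### Auxiliary lemmas: sums -/

lemma sum_comm3 {α M : Type*} [AddCommMonoid M] {s : Finset α} {β : Type*} [Fintype β]
    (f : β → β → α → M) :
    (∑ b : β, ∑ b' : β, ∑ j ∈ s, f b b' j) = ∑ j ∈ s, ∑ b : β, ∑ b' : β, f b b' j :=
  calc (∑ b : β, ∑ b' : β, ∑ j ∈ s, f b b' j)
      = ∑ b : β, ∑ j ∈ s, ∑ b' : β, f b b' j :=
        Finset.sum_congr rfl fun b _ => Finset.sum_comm
    _ = ∑ j ∈ s, ∑ b : β, ∑ b' : β, f b b' j := Finset.sum_comm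

lemma sum_offDiag_eq {N : ℕ} {M : Type*} [AddCommGroup M] (g : Fin N × Fin N → M) :
    ∑ p ∈ Finset.univ.offDiag, g p = (∑ k, ∑ l, g (k, l)) - ∑ k, g (k, k) := by
  have h := Finset.sum_union (f := g)
    (Finset.disjoint_diag_offDiag (Finset.univ : Finset (Fin N)))
  rw [Finset.diag_union_offDiag] at h
  rw [eq_sub_iff_add_eq, add_comm, ← Finset.sum_diag, ← h, Finset.sum_product]

lemma sum_offDiag_symm {N : ℕ} (f : Fin N → Fin N → ℝ) (hsymm : ∀ k l, f k l = f l k) :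
    ∑ p ∈ Finset.univ.offDiag, f p.1 p.2
      = ∑ p ∈ Finset.univ.filter (fun p : Fin N × Fin N => p.1 < p.2), 2 * f p.1 p.2 := by
  classical
  have h1 : (Finset.univ : Finset (Fin N)).offDiag
      = (Finset.univ.filter fun p : Fin N × Fin N => p.1 < p.2)
        ∪ (Finset.univ.filter fun p : Fin N × Fin N => p.2 < p.1) := by
    ext ⟨k, l⟩
    simp only [Finset.mem_offDiag, Finset.mem_union, Finset.mem_filter, Finset.mem_univ,
      true_and]
    omega
  have hdisj : Disjoint (Finset.univ.filter fun p : Fin N × Fin N => p.1 < p.2)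
      (Finset.univ.filter fun p : Fin N × Fin N => p.2 < p.1) := by
    rw [Finset.disjoint_left]
    rintro ⟨k, l⟩ h1 h2
    simp only [Finset.mem_filter] at h1 h2
    omega
  rw [h1, Finset.sum_union hdisj]
  have h2 : ∑ p ∈ Finset.univ.filter (fun p : Fin N × Fin N => p.2 < p.1), f p.1 p.2
      = ∑ p ∈ Finset.univ.filter (fun p : Fin N × Fin N => p.1 < p.2), f p.1 p.2 := by
    refine Finset.sum_nbij' (fun p => p.swap) (fun p => p.swap) ?_ ?_ ?_ ?_ ?_
    · rintro ⟨k, l⟩ h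
      simp only [Finset.mem_filter, Finset.mem_univ] at h ⊢; exact ⟨trivial, h.2⟩
    · rintro ⟨k, l⟩ h
      simp only [Finset.mem_filter, Finset.mem_univ] at h ⊢; exact ⟨trivial, h.2⟩
    · rintro ⟨k, l⟩ _; rfl
    · rintro ⟨k, l⟩ _; rfl
    · rintro ⟨k, l⟩ _; exact hsymm k l
  rw [h2]
  simp [two_mul, Finset.sum_add_distrib]

/-! ### Auxiliary lemmas: tensorApply and marginals -/

section TA
variable {NA NB : ℕ} {σ : ℂ →+* ℂ}
  (F : Matrix (Fin NA) (Fin NA) ℂ →ₛₗ[σ] Matrix (Fin NA) (Fin NA) ℂ)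
  (G : Matrix (Fin NB) (Fin NB) ℂ →ₛₗ[σ] Matrix (Fin NB) (Fin NB) ℂ)

lemma tensorApply_kron (A : Matrix (Fin NA) (Fin NA) ℂ) (B : Matrix (Fin NB) (Fin NB) ℂ) :
    tensorApply F G (A ⊗ₖ B) = F A ⊗ₖ G B := by
  have h1 : ∀ b b' : Fin NB, (Matrix.of fun i i' => (A ⊗ₖ B) (i, b) (i', b')) = B b b' • A := by
    intro b b'; ext i i'; simp [Matrix.kroneckerMap_apply, mul_comm]
  have hB : B = ∑ b : Fin NB, ∑ b' : Fin NB, (B b b') • Matrix.single b b' (1 : ℂ) := by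
    conv_lhs => rw [matrix_eq_sum_single B]
    simp [Matrix.smul_single]
  conv_rhs => rw [hB]
  simp only [tensorApply, h1, map_sum, LinearMap.map_smulₛₗ, kronecker_sum', kronecker_smul',
    smul_kronecker']

lemma tensorApply_sum {ι : Type*} (s : Finset ι)
    (M : ι → Matrix (Fin NA × Fin NB) (Fin NA × Fin NB) ℂ) :
    tensorApply F G (∑ i ∈ s, M i) = ∑ i ∈ s, tensorApply F G (M i) := by
  have h1 : ∀ b b' : Fin NB, (Matrix.of fun i i' => (∑ j ∈ s, M j) (i, b) (i', b'))
      = ∑ j ∈ s, (Matrix.of fun i i' => (M j) (i, b) (i', b')) := by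
    intro b b'; ext i i'; simp [Matrix.sum_apply]
  simp only [tensorApply, h1, map_sum, sum_kronecker'']
  exact sum_comm3 _

lemma tensorApply_smul (c : ℂ) (M : Matrix (Fin NA × Fin NB) (Fin NA × Fin NB) ℂ) :
    tensorApply F G (c • M) = σ c • tensorApply F G M := by
  have h1 : ∀ b b' : Fin NB, (Matrix.of fun i i' => (c • M) (i, b) (i', b'))
      = c • (Matrix.of fun i i' => M (i, b) (i', b')) := by
    intro b b'; ext i i'; simp
  simp only [tensorApply, h1, LinearMap.map_smulₛₗ, smul_kronecker', Finset.smul_sum]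

end TA

section marg
variable {NA NB : ℕ}

lemma margA_kron (A : Matrix (Fin NA) (Fin NA) ℂ) (B : Matrix (Fin NB) (Fin NB) ℂ) :
    margA (A ⊗ₖ B) = B.trace • A := by
  ext i i'
  simp only [margA, Matrix.of_apply, Matrix.kroneckerMap_apply, Matrix.smul_apply,
    Matrix.trace, Matrix.diag, smul_eq_mul, ← Finset.mul_sum]
  ring

lemma margB_kron (A : Matrix (Fin NA) (Fin NA) ℂ) (B : Matrix (Fin NB) (Fin NB) ℂ) :
    margB (A ⊗ₖ B) = A.trace • B := by
  ext b b'
  simp only [margB, Matrix.of_apply, Matrix.kroneckerMap_apply, Matrix.smul_apply,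
    Matrix.trace, Matrix.diag, smul_eq_mul, ← Finset.sum_mul]

lemma margA_sum {ι : Type*} (s : Finset ι)
    (M : ι → Matrix (Fin NA × Fin NB) (Fin NA × Fin NB) ℂ) :
    margA (∑ i ∈ s, M i) = ∑ i ∈ s, margA (M i) := by
  ext i i'
  simp only [margA, Matrix.of_apply, Matrix.sum_apply]
  exact Finset.sum_comm

lemma margB_sum {ι : Type*} (s : Finset ι)
    (M : ι → Matrix (Fin NA × Fin NB) (Fin NA × Fin NB) ℂ) :
    margB (∑ i ∈ s, M i) = ∑ i ∈ s, margB (M i) := by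
  ext b b'
  simp only [margB, Matrix.of_apply, Matrix.sum_apply]
  exact Finset.sum_comm

lemma margA_smul (c : ℂ) (M : Matrix (Fin NA × Fin NB) (Fin NA × Fin NB) ℂ) :
    margA (c • M) = c • margA M := by
  ext i i'
  simp [margA, Finset.mul_sum]

lemma margB_smul (c : ℂ) (M : Matrix (Fin NA × Fin NB) (Fin NA × Fin NB) ℂ) :
    margB (c • M) = c • margB M := by
  ext b b'
  simp [margB, Finset.mul_sum]

end marg

/-! ### CCN bound from an explicit decomposition -/

lemma ccn_le_decomp {NA NB : ℕ} {ι : Type*} [Fintype ι]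
    (C : Matrix (Fin NA × Fin NB) (Fin NA × Fin NB) ℂ)
    (A : ι → Matrix (Fin NA) (Fin NA) ℂ) (B : ι → Matrix (Fin NB) (Fin NB) ℂ)
    (h : C = ∑ i, A i ⊗ₖ B i) :
    ccn C ≤ ∑ i, hsNorm (A i) * hsNorm (B i) := by
  apply csInf_le
  · refine ⟨0, ?_⟩
    rintro r ⟨n, A', B', -, rfl⟩
    exact Finset.sum_nonneg fun k _ => mul_nonneg (hsNorm_nonneg _) (hsNorm_nonneg _)
  · refine ⟨Fintype.card ι, fun k => A ((Fintype.equivFin ι).symm k),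
      fun k => B ((Fintype.equivFin ι).symm k), ?_, ?_⟩
    · rw [h]
      exact (Fintype.sum_equiv (Fintype.equivFin ι).symm _ _ fun k => rfl).symm
    · exact (Fintype.sum_equiv (Fintype.equivFin ι).symm _ _ fun k => rfl).symm

/-- Main theorem: a family of separability criteria from transformed operators.
For jointly linear or conjugate-linear superoperators ℰₖ satisfying the stated norm
bounds, every separable state ρ satisfies the CCN inequality for its transform. -/
theorem stmt14_main_theorem {NA NB : ℕ} (hA : 2 ≤ NA) (hB : 2 ≤ NB)
    (n : ℕ) (hn : 1 ≤ n) (σ : ℂ →+* ℂ)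
    (hσ : σ = RingHom.id ℂ ∨ σ = starRingEnd ℂ)
    (EA : Fin n → (Matrix (Fin NA) (Fin NA) ℂ →ₛₗ[σ] Matrix (Fin NA) (Fin NA) ℂ))
    (EB : Fin n → (Matrix (Fin NB) (Fin NB) ℂ →ₛₗ[σ] Matrix (Fin NB) (Fin NB) ℂ))
    (εA εB : ℝ) (hεA : 0 ≤ εA) (hεB : 0 ≤ εB)
    (hboundA : ∀ σs : Fin n → Matrix (Fin NA) (Fin NA) ℂ,
      (∀ k, IsDensity (σs k)) → ∑ k, hsNorm (EA k (σs k)) ^ 2 ≤ n * εA)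
    (hboundB : ∀ σs : Fin n → Matrix (Fin NB) (Fin NB) ℂ,
      (∀ k, IsDensity (σs k)) → ∑ k, hsNorm (EB k (σs k)) ^ 2 ≤ n * εB)
    (ρ : Matrix (Fin NA × Fin NB) (Fin NA × Fin NB) ℂ)
    (hsep : IsSeparableState ρ) :
    ccn ((n : ℂ)⁻¹ • (∑ k, tensorApply (EA k) (EB k) ρ)
        + (n : ℂ)⁻¹ • (∑ p ∈ Finset.univ.offDiag,
            tensorApply (EA p.1) (EB p.2) (margA ρ ⊗ₖ margB ρ)))
      ≤ Real.sqrt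
          ((εA + (n : ℝ)⁻¹ *
              ∑ p ∈ Finset.univ.filter (fun p : Fin n × Fin n => p.1 < p.2),
                2 * (hsInner (EA p.1 (margA ρ)) (EA p.2 (margA ρ))).re)
           * (εB + (n : ℝ)⁻¹ *
              ∑ p ∈ Finset.univ.filter (fun p : Fin n × Fin n => p.1 < p.2),
                2 * (hsInner (EB p.1 (margB ρ)) (EB p.2 (margB ρ))).re)) := by
  classical
  obtain ⟨m, p, ρA, ρB, hp, hpsum, hdA, hdB, hρ⟩ := hsep
  have hn0 : (0 : ℝ) < n := by exact_mod_cast hn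
  have hnC : (n : ℂ) ≠ 0 := by exact_mod_cast hn0.ne'
  have hσr : ∀ r : ℝ, σ ((r : ℂ)) = (r : ℂ) := by
    rcases hσ with h | h <;> subst h <;> simp [Complex.conj_ofReal]
  -- abbreviations
  set a : Fin m → Fin n → Matrix (Fin NA) (Fin NA) ℂ := fun i k => EA k (ρA i) with ha
  set b : Fin m → Fin n → Matrix (Fin NB) (Fin NB) ℂ := fun i k => EB k (ρB i) with hb
  set abar : Fin n → Matrix (Fin NA) (Fin NA) ℂ := fun k => EA k (margA ρ) with habar0
  set bbar : Fin n → Matrix (Fin NB) (Fin NB) ℂ := fun k => EB k (margB ρ) with hbbar0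
  -- marginals
  have hmA : margA ρ = ∑ i, (p i : ℂ) • ρA i := by
    rw [hρ, margA_sum]
    refine Finset.sum_congr rfl fun i _ => ?_
    rw [margA_smul, margA_kron, (hdB i).2, one_smul]
  have hmB : margB ρ = ∑ i, (p i : ℂ) • ρB i := by
    rw [hρ, margB_sum]
    refine Finset.sum_congr rfl fun i _ => ?_
    rw [margB_smul, margB_kron, (hdA i).2, one_smul]
  have habar : ∀ k, abar k = ∑ i, (p i : ℂ) • a i k := by
    intro k
    rw [show abar k = EA k (margA ρ) from rfl, hmA, map_sum]
    exact Finset.sum_congr rfl fun i _ => by rw [LinearMap.map_smulₛₗ, hσr]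
  have hbbar : ∀ k, bbar k = ∑ i, (p i : ℂ) • b i k := by
    intro k
    rw [show bbar k = EB k (margB ρ) from rfl, hmB, map_sum]
    exact Finset.sum_congr rfl fun i _ => by rw [LinearMap.map_smulₛₗ, hσr]
  have hpsumC : (∑ i, ((p i : ℂ))) = 1 := by
    rw [← Complex.ofReal_sum, hpsum, Complex.ofReal_one]
  set Abar : Matrix (Fin NA) (Fin NA) ℂ := ∑ k, abar k with hAbar
  set Bbar : Matrix (Fin NB) (Fin NB) ℂ := ∑ k, bbar k with hBbar
  -- decomposition data
  set w : Fin m × Fin n → ℝ := fun x => p x.1 / n with hw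
  have hw0 : ∀ x, 0 ≤ w x := fun x => div_nonneg (hp x.1).le hn0.le
  set cA : Fin m × Fin n → Matrix (Fin NA) (Fin NA) ℂ := fun x => a x.1 x.2 - abar x.2 with hcA
  set cB : Fin m × Fin n → Matrix (Fin NB) (Fin NB) ℂ := fun x => b x.1 x.2 - bbar x.2 with hcB
  set Adec : (Fin m × Fin n) ⊕ Unit → Matrix (Fin NA) (Fin NA) ℂ :=
    Sum.elim (fun x => ((Real.sqrt (w x) : ℝ) : ℂ) • cA x)
      (fun _ => ((Real.sqrt ((n : ℝ)⁻¹) : ℝ) : ℂ) • Abar) with hAdec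
  set Bdec : (Fin m × Fin n) ⊕ Unit → Matrix (Fin NB) (Fin NB) ℂ :=
    Sum.elim (fun x => ((Real.sqrt (w x) : ℝ) : ℂ) • cB x)
      (fun _ => ((Real.sqrt ((n : ℝ)⁻¹) : ℝ) : ℂ) • Bbar) with hBdec
  -- step T1
  have hT1 : ∀ k, tensorApply (EA k) (EB k) ρ = ∑ i, (p i : ℂ) • (a i k ⊗ₖ b i k) := by
    intro k
    rw [hρ, tensorApply_sum]
    exact Finset.sum_congr rfl fun i _ => by
      rw [tensorApply_smul, tensorApply_kron, hσr]
  -- step T2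
  have hT2 : (∑ q ∈ Finset.univ.offDiag,
        tensorApply (EA q.1) (EB q.2) (margA ρ ⊗ₖ margB ρ))
      = (∑ k, ∑ l, abar k ⊗ₖ bbar l) - ∑ k, abar k ⊗ₖ bbar k := by
    have : ∀ q : Fin n × Fin n, tensorApply (EA q.1) (EB q.2) (margA ρ ⊗ₖ margB ρ)
        = abar q.1 ⊗ₖ bbar q.2 := fun q => tensorApply_kron _ _ _ _
    rw [Finset.sum_congr rfl fun q _ => this q]
    exact sum_offDiag_eq (fun q => abar q.1 ⊗ₖ bbar q.2)
  -- step T3 : per-k identity for the centered sum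
  have hT3 : ∀ k, (∑ i, ((p i : ℂ)) • (cA (i, k) ⊗ₖ cB (i, k)))
      = (∑ i, (p i : ℂ) • (a i k ⊗ₖ b i k)) - abar k ⊗ₖ bbar k := by
    intro k
    have expand : ∀ i, cA (i, k) ⊗ₖ cB (i, k)
        = a i k ⊗ₖ b i k - a i k ⊗ₖ bbar k - abar k ⊗ₖ b i k + abar k ⊗ₖ bbar k := by
      intro i
      rw [hcA, hcB]
      simp only [sub_kronecker', kronecker_sub']
      abel
    simp only [expand, smul_add, smul_sub, Finset.sum_add_distrib, Finset.sum_sub_distrib]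
    have e1 : (∑ i, (p i : ℂ) • (a i k ⊗ₖ bbar k)) = abar k ⊗ₖ bbar k := by
      rw [habar k, sum_kronecker'']
      exact Finset.sum_congr rfl fun i _ => (smul_kronecker' _ _ _).symm
    have e2 : (∑ i, (p i : ℂ) • (abar k ⊗ₖ b i k)) = abar k ⊗ₖ bbar k := by
      rw [hbbar k, kronecker_sum']
      exact Finset.sum_congr rfl fun i _ => (kronecker_smul' _ _ _).symm
    have e3 : (∑ i, (p i : ℂ) • (abar k ⊗ₖ bbar k)) = abar k ⊗ₖ bbar k := by
      rw [← Finset.sum_smul, hpsumC, one_smul]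
    rw [e1, e2, e3]
    abel
  -- the key decomposition identity
  have hkey : ((n : ℂ)⁻¹ • (∑ k, tensorApply (EA k) (EB k) ρ)
        + (n : ℂ)⁻¹ • (∑ q ∈ Finset.univ.offDiag,
            tensorApply (EA q.1) (EB q.2) (margA ρ ⊗ₖ margB ρ)))
      = ∑ x, Adec x ⊗ₖ Bdec x := by
    rw [Fintype.sum_sum_type]
    have hinl : ∀ x : Fin m × Fin n, Adec (Sum.inl x) ⊗ₖ Bdec (Sum.inl x)
        = (n : ℂ)⁻¹ • ((p x.1 : ℂ) • (cA x ⊗ₖ cB x)) := by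
      intro x
      rw [hAdec, hBdec]
      simp only [Sum.elim_inl]
      rw [smul_kronecker', kronecker_smul', smul_smul, smul_smul]
      congr 1
      rw [← Complex.ofReal_mul, Real.mul_self_sqrt (hw0 x), hw]
      push_cast
      ring
    have hinr : ∀ u : Unit, Adec (Sum.inr u) ⊗ₖ Bdec (Sum.inr u)
        = (n : ℂ)⁻¹ • (Abar ⊗ₖ Bbar) := by
      intro u
      rw [hAdec, hBdec]
      simp only [Sum.elim_inr]
      rw [smul_kronecker', kronecker_smul', smul_smul]
      congr 1
      rw [← Complex.ofReal_mul, Real.mul_self_sqrt (by positivity)]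
      push_cast
      ring
    rw [Finset.sum_congr rfl fun x _ => hinl x, Finset.sum_congr rfl fun u _ => hinr u]
    simp only [Finset.univ_unique, Finset.sum_singleton]
    rw [← Finset.smul_sum, Fintype.sum_prod_type]
    have : (∑ i : Fin m, ∑ k : Fin n, (p i : ℂ) • (cA (i, k) ⊗ₖ cB (i, k)))
        = ∑ k : Fin n, ((∑ i, (p i : ℂ) • (a i k ⊗ₖ b i k)) - abar k ⊗ₖ bbar k) := by
      rw [Finset.sum_comm]
      exact Finset.sum_congr rfl fun k _ => hT3 k
    rw [this, hT2]
    rw [show (∑ k, tensorApply (EA k) (EB k) ρ)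
        = ∑ k, ∑ i, (p i : ℂ) • (a i k ⊗ₖ b i k) from Finset.sum_congr rfl fun k _ => hT1 k]
    rw [Finset.sum_sub_distrib]
    have hAB : Abar ⊗ₖ Bbar = ∑ k, ∑ l, abar k ⊗ₖ bbar l := by
      rw [hAbar, hBbar, sum_kronecker'']
      exact Finset.sum_congr rfl fun k _ => kronecker_sum' _ _ _
    rw [hAB, smul_sub, smul_sub]
    abel
  -- apply the CCN decomposition bound
  have hccn := ccn_le_decomp _ Adec Bdec hkey
  -- the sqrt-factor functions
  set f : (Fin m × Fin n) ⊕ Unit → ℝ :=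
    Sum.elim (fun x => w x * hsNorm (cA x) ^ 2) (fun _ => (n : ℝ)⁻¹ * hsNorm Abar ^ 2) with hf
  set g : (Fin m × Fin n) ⊕ Unit → ℝ :=
    Sum.elim (fun x => w x * hsNorm (cB x) ^ 2) (fun _ => (n : ℝ)⁻¹ * hsNorm Bbar ^ 2) with hg
  have hf0 : ∀ x, 0 ≤ f x := by
    rintro (x | u)
    · exact mul_nonneg (hw0 x) (sq_nonneg _)
    · exact mul_nonneg (by positivity) (sq_nonneg _)
  have hg0 : ∀ x, 0 ≤ g x := by
    rintro (x | u)
    · exact mul_nonneg (hw0 x) (sq_nonneg _)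
    · exact mul_nonneg (by positivity) (sq_nonneg _)
  have hnorm : ∀ x, hsNorm (Adec x) * hsNorm (Bdec x) = Real.sqrt (f x) * Real.sqrt (g x) := by
    rintro (x | u)
    · simp only [hAdec, hBdec, hf, hg, Sum.elim_inl]
      rw [hsNorm_ofReal_smul _ (Real.sqrt_nonneg _), hsNorm_ofReal_smul _ (Real.sqrt_nonneg _),
        Real.sqrt_mul (hw0 x), Real.sqrt_mul (hw0 x), Real.sqrt_sq (hsNorm_nonneg _),
        Real.sqrt_sq (hsNorm_nonneg _)]
    · simp only [hAdec, hBdec, hf, hg, Sum.elim_inr]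
      rw [hsNorm_ofReal_smul _ (Real.sqrt_nonneg _), hsNorm_ofReal_smul _ (Real.sqrt_nonneg _),
        Real.sqrt_mul (by positivity : (0:ℝ) ≤ (n : ℝ)⁻¹),
        Real.sqrt_mul (by positivity : (0:ℝ) ≤ (n : ℝ)⁻¹),
        Real.sqrt_sq (hsNorm_nonneg _), Real.sqrt_sq (hsNorm_nonneg _)]
  -- Cauchy-Schwarz
  have hCS : (∑ x, hsNorm (Adec x) * hsNorm (Bdec x))
      ≤ Real.sqrt (∑ x, f x) * Real.sqrt (∑ x, g x) := by
    rw [Finset.sum_congr rfl fun x _ => hnorm x]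
    exact Real.sum_sqrt_mul_sqrt_le _ (fun x => hf0 x) (fun x => hg0 x)
  -- variance identity, A side
  have hvarA : ∀ k : Fin n, (∑ i, p i * hsNorm (cA (i, k)) ^ 2)
      = (∑ i, p i * hsNorm (a i k) ^ 2) - hsNorm (abar k) ^ 2 := by
    intro k
    have hC : (∑ i, ((p i : ℂ)) * hsInner (cA (i, k)) (cA (i, k)))
        = (∑ i, ((p i : ℂ)) * hsInner (a i k) (a i k)) - hsInner (abar k) (abar k) := by
      have expand : ∀ i, hsInner (cA (i, k)) (cA (i, k))
          = hsInner (a i k) (a i k) - hsInner (a i k) (abar k) - hsInner (abar k) (a i k)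
            + hsInner (abar k) (abar k) := by
        intro i
        rw [hcA]
        simp only [hsInner_sub_left, hsInner_sub_right]
        abel
      simp only [expand, mul_add, mul_sub, Finset.sum_add_distrib, Finset.sum_sub_distrib]
      have e1 : (∑ i, ((p i : ℂ)) * hsInner (a i k) (abar k)) = hsInner (abar k) (abar k) := by
        rw [habar k, hsInner_sum_left]
        exact Finset.sum_congr rfl fun i _ => by
          rw [hsInner_smul_left, ← hσr (p i)]
          rcases hσ with h | h <;> subst h <;> simp [Complex.conj_ofReal]
      have e2 : (∑ i, ((p i : ℂ)) * hsInner (abar k) (a i k)) = hsInner (abar k) (abar k) := by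
        have h4 : ∀ i : Fin m, ((p i : ℂ)) * hsInner (abar k) (a i k)
            = hsInner (abar k) ((p i : ℂ) • a i k) := fun i => (hsInner_smul_right _ _ _).symm
        rw [Finset.sum_congr rfl fun i _ => h4 i, ← hsInner_sum_right]
        exact congrArg _ (habar k).symm
      have e3 : (∑ i, ((p i : ℂ)) * hsInner (abar k) (abar k)) = hsInner (abar k) (abar k) := by
        rw [← Finset.sum_mul, hpsumC, one_mul]
      rw [e1, e2, e3]
      abel
    have := congrArg Complex.re hC
    simpa [Complex.re_sum, Complex.re_ofReal_mul, hsNorm_sq] using this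
  -- variance identity, B side
  have hvarB : ∀ k : Fin n, (∑ i, p i * hsNorm (cB (i, k)) ^ 2)
      = (∑ i, p i * hsNorm (b i k) ^ 2) - hsNorm (bbar k) ^ 2 := by
    intro k
    have hC : (∑ i, ((p i : ℂ)) * hsInner (cB (i, k)) (cB (i, k)))
        = (∑ i, ((p i : ℂ)) * hsInner (b i k) (b i k)) - hsInner (bbar k) (bbar k) := by
      have expand : ∀ i, hsInner (cB (i, k)) (cB (i, k))
          = hsInner (b i k) (b i k) - hsInner (b i k) (bbar k) - hsInner (bbar k) (b i k)
            + hsInner (bbar k) (bbar k) := by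
        intro i
        rw [hcB]
        simp only [hsInner_sub_left, hsInner_sub_right]
        abel
      simp only [expand, mul_add, mul_sub, Finset.sum_add_distrib, Finset.sum_sub_distrib]
      have e1 : (∑ i, ((p i : ℂ)) * hsInner (b i k) (bbar k)) = hsInner (bbar k) (bbar k) := by
        rw [hbbar k, hsInner_sum_left]
        exact Finset.sum_congr rfl fun i _ => by
          rw [hsInner_smul_left, ← hσr (p i)]
          rcases hσ with h | h <;> subst h <;> simp [Complex.conj_ofReal]
      have e2 : (∑ i, ((p i : ℂ)) * hsInner (bbar k) (b i k)) = hsInner (bbar k) (bbar k) := by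
        have h4 : ∀ i : Fin m, ((p i : ℂ)) * hsInner (bbar k) (b i k)
            = hsInner (bbar k) ((p i : ℂ) • b i k) := fun i => (hsInner_smul_right _ _ _).symm
        rw [Finset.sum_congr rfl fun i _ => h4 i, ← hsInner_sum_right]
        exact congrArg _ (hbbar k).symm
      have e3 : (∑ i, ((p i : ℂ)) * hsInner (bbar k) (bbar k)) = hsInner (bbar k) (bbar k) := by
        rw [← Finset.sum_mul, hpsumC, one_mul]
      rw [e1, e2, e3]
      abel
    have := congrArg Complex.re hC
    simpa [Complex.re_sum, Complex.re_ofReal_mul, hsNorm_sq] using this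
  -- expansion of the norms of the averaged operators
  have hnormAbar : hsNorm Abar ^ 2 = ∑ k, ∑ l, (hsInner (abar k) (abar l)).re := by
    rw [hsNorm_sq, hAbar, hsInner_sum_left]
    rw [Finset.sum_congr rfl fun k (_ : k ∈ Finset.univ) => hsInner_sum_right Finset.univ (abar k) abar]
    simp [Complex.re_sum]
  have hnormBbar : hsNorm Bbar ^ 2 = ∑ k, ∑ l, (hsInner (bbar k) (bbar l)).re := by
    rw [hsNorm_sq, hBbar, hsInner_sum_left]
    rw [Finset.sum_congr rfl fun k (_ : k ∈ Finset.univ) => hsInner_sum_right Finset.univ (bbar k) bbar]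
    simp [Complex.re_sum]
  set DA : ℝ := ∑ q ∈ Finset.univ.offDiag, (hsInner (abar q.1) (abar q.2)).re with hDA
  set DB : ℝ := ∑ q ∈ Finset.univ.offDiag, (hsInner (bbar q.1) (bbar q.2)).re with hDB
  have hDA' : DA = (∑ k, ∑ l, (hsInner (abar k) (abar l)).re) - ∑ k, hsNorm (abar k) ^ 2 := by
    rw [hDA, sum_offDiag_eq (fun q => (hsInner (abar q.1) (abar q.2)).re)]
    simp [hsNorm_sq]
  have hDB' : DB = (∑ k, ∑ l, (hsInner (bbar k) (bbar l)).re) - ∑ k, hsNorm (bbar k) ^ 2 := by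
    rw [hDB, sum_offDiag_eq (fun q => (hsInner (bbar q.1) (bbar q.2)).re)]
    simp [hsNorm_sq]
  -- sum of f
  have hfsum : (∑ x, f x) = (n : ℝ)⁻¹ * ((∑ i, p i * (∑ k, hsNorm (a i k) ^ 2)) + DA) := by
    rw [Fintype.sum_sum_type]
    simp only [hf, Sum.elim_inl, Sum.elim_inr, Finset.univ_unique, Finset.sum_singleton]
    rw [Fintype.sum_prod_type]
    have h1 : (∑ i : Fin m, ∑ k : Fin n, w (i, k) * hsNorm (cA (i, k)) ^ 2)
        = (n : ℝ)⁻¹ * ∑ k : Fin n, ∑ i : Fin m, p i * hsNorm (cA (i, k)) ^ 2 := by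
      rw [Finset.mul_sum, Finset.sum_comm]
      refine Finset.sum_congr rfl fun k _ => ?_
      rw [Finset.mul_sum]
      refine Finset.sum_congr rfl fun i _ => ?_
      rw [hw]
      ring
    rw [h1, Finset.sum_congr rfl fun k (_ : k ∈ Finset.univ) => hvarA k]
    rw [hnormAbar, Finset.sum_sub_distrib]
    rw [Finset.sum_comm (f := fun k i => p i * hsNorm (a i k) ^ 2)]
    rw [hDA']
    have : (∑ i : Fin m, ∑ k : Fin n, p i * hsNorm (a i k) ^ 2)
        = ∑ i, p i * (∑ k, hsNorm (a i k) ^ 2) := by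
      exact Finset.sum_congr rfl fun i _ => (Finset.mul_sum _ _ _).symm
    rw [this]
    ring
  have hgsum : (∑ x, g x) = (n : ℝ)⁻¹ * ((∑ i, p i * (∑ k, hsNorm (b i k) ^ 2)) + DB) := by
    rw [Fintype.sum_sum_type]
    simp only [hg, Sum.elim_inl, Sum.elim_inr, Finset.univ_unique, Finset.sum_singleton]
    rw [Fintype.sum_prod_type]
    have h1 : (∑ i : Fin m, ∑ k : Fin n, w (i, k) * hsNorm (cB (i, k)) ^ 2)
        = (n : ℝ)⁻¹ * ∑ k : Fin n, ∑ i : Fin m, p i * hsNorm (cB (i, k)) ^ 2 := by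
      rw [Finset.mul_sum, Finset.sum_comm]
      refine Finset.sum_congr rfl fun k _ => ?_
      rw [Finset.mul_sum]
      refine Finset.sum_congr rfl fun i _ => ?_
      rw [hw]
      ring
    rw [h1, Finset.sum_congr rfl fun k (_ : k ∈ Finset.univ) => hvarB k]
    rw [hnormBbar, Finset.sum_sub_distrib]
    rw [Finset.sum_comm (f := fun k i => p i * hsNorm (b i k) ^ 2)]
    rw [hDB']
    have : (∑ i : Fin m, ∑ k : Fin n, p i * hsNorm (b i k) ^ 2)
        = ∑ i, p i * (∑ k, hsNorm (b i k) ^ 2) := by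
      exact Finset.sum_congr rfl fun i _ => (Finset.mul_sum _ _ _).symm
    rw [this]
    ring
  -- applying the hypothesis bounds
  have hXA : (∑ x, f x) ≤ εA + (n : ℝ)⁻¹ * DA := by
    rw [hfsum]
    have h1 : (∑ i, p i * (∑ k, hsNorm (a i k) ^ 2)) ≤ ∑ i, p i * (n * εA) := by
      refine Finset.sum_le_sum fun i _ => ?_
      exact mul_le_mul_of_nonneg_left (hboundA (fun _ => ρA i) (fun _ => hdA i)) (hp i).le
    have h2 : (∑ i, p i * (n * εA)) = n * εA := by
      rw [← Finset.sum_mul, hpsum, one_mul]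
    calc (n : ℝ)⁻¹ * ((∑ i, p i * (∑ k, hsNorm (a i k) ^ 2)) + DA)
        ≤ (n : ℝ)⁻¹ * (n * εA + DA) := by
          refine mul_le_mul_of_nonneg_left ?_ (by positivity)
          linarith [h1.trans h2.le]
      _ = εA + (n : ℝ)⁻¹ * DA := by
          field_simp
  have hXB : (∑ x, g x) ≤ εB + (n : ℝ)⁻¹ * DB := by
    rw [hgsum]
    have h1 : (∑ i, p i * (∑ k, hsNorm (b i k) ^ 2)) ≤ ∑ i, p i * (n * εB) := by
      refine Finset.sum_le_sum fun i _ => ?_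
      exact mul_le_mul_of_nonneg_left (hboundB (fun _ => ρB i) (fun _ => hdB i)) (hp i).le
    have h2 : (∑ i, p i * (n * εB)) = n * εB := by
      rw [← Finset.sum_mul, hpsum, one_mul]
    calc (n : ℝ)⁻¹ * ((∑ i, p i * (∑ k, hsNorm (b i k) ^ 2)) + DB)
        ≤ (n : ℝ)⁻¹ * (n * εB + DB) := by
          refine mul_le_mul_of_nonneg_left ?_ (by positivity)
          linarith [h1.trans h2.le]
      _ = εB + (n : ℝ)⁻¹ * DB := by
          field_simp
  have hf0' : 0 ≤ ∑ x, f x := Finset.sum_nonneg fun x _ => hf0 x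
  have hg0' : 0 ≤ ∑ x, g x := Finset.sum_nonneg fun x _ => hg0 x
  -- rewrite the right-hand side of the goal
  have hRA : (∑ q ∈ Finset.univ.filter (fun q : Fin n × Fin n => q.1 < q.2),
        2 * (hsInner (abar q.1) (abar q.2)).re) = DA := by
    rw [hDA, sum_offDiag_symm (fun k l => (hsInner (abar k) (abar l)).re)
      (fun k l => hsInner_re_comm _ _)]
  have hRB : (∑ q ∈ Finset.univ.filter (fun q : Fin n × Fin n => q.1 < q.2),
        2 * (hsInner (bbar q.1) (bbar q.2)).re) = DB := by
    rw [hDB, sum_offDiag_symm (fun k l => (hsInner (bbar k) (bbar l)).re)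
      (fun k l => hsInner_re_comm _ _)]
  rw [hRA, hRB]
  calc ccn _ ≤ ∑ x, hsNorm (Adec x) * hsNorm (Bdec x) := hccn
    _ ≤ Real.sqrt (∑ x, f x) * Real.sqrt (∑ x, g x) := hCS
    _ ≤ Real.sqrt (εA + (n : ℝ)⁻¹ * DA) * Real.sqrt (εB + (n : ℝ)⁻¹ * DB) :=
        mul_le_mul (Real.sqrt_le_sqrt hXA) (Real.sqrt_le_sqrt hXB)
          (Real.sqrt_nonneg _) (Real.sqrt_nonneg _)
    _ = Real.sqrt ((εA + (n : ℝ)⁻¹ * DA) * (εB + (n : ℝ)⁻¹ * DB)) :=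
        (Real.sqrt_mul (hf0'.trans hXA) _).symm
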